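/- arXiv:2509.26337 — 7 statements merged into one kernel-verified Lean document; each statement's English description precedes it below -/
import Mathlib

section
/- Let a > 0, α ∈ (0,1], η > 0. Define the one-dimensional LocalMuon recursion with two clients and loss functions f₁(x) = x²/2 and f₂(x) = (x+a)²/2, global loss f(x) = (f₁(x)+f₂(x))/2, initialized at x⁽⁰⁾ = −a/4 with momenta m₁⁽⁰⁾ = m₂⁽⁰⁾ = 0, and updated by m₁⁽ʳ⁺¹⁾ = (1−α)m₁⁽ʳ⁾ + α·x⁽ʳ⁾, m₂⁽ʳ⁺¹⁾ = (1−α)m₂⁽ʳ⁾ + α·(x⁽ʳ⁾+a), x⁽ʳ⁺¹⁾ = x⁽ʳ⁾ − (η/2)·(sign(m₁⁽ʳ⁺¹⁾) + sign(m₂⁽ʳ⁺¹⁾)). Then for every r ≥ 0 one has x⁽ʳ⁾ = −a/4, and the global gradient satisfies (f′(x⁽ʳ⁾))² = a²/16 = ζ⋆²/4, where ζ⋆² := (1/2)·((f₁′(x⋆))² + (f₂′(x⋆))²) = a²/4 and x⋆ = −a/2 is the unique minimizer of f. In particular, the iterates never converge to a stationary point of f. -/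
theorem localMuon_lower_bound (a α η : ℝ) (ha : 0 < a) (hα : α ∈ Set.Ioc (0 : ℝ) 1)
    (hη : 0 < η) (x m₁ m₂ : ℕ → ℝ) (f f₁ f₂ : ℝ → ℝ)
    (hf₁ : ∀ t, f₁ t = t ^ 2 / 2) (hf₂ : ∀ t, f₂ t = (t + a) ^ 2 / 2)
    (hf : ∀ t, f t = (f₁ t + f₂ t) / 2)
    (hx0 : x 0 = -a / 4) (hm₁0 : m₁ 0 = 0) (hm₂0 : m₂ 0 = 0)
    (hm₁ : ∀ r, m₁ (r + 1) = (1 - α) * m₁ r + α * x r)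
    (hm₂ : ∀ r, m₂ (r + 1) = (1 - α) * m₂ r + α * (x r + a))
    (hx : ∀ r, x (r + 1) =
      x r - (η / 2) * (Real.sign (m₁ (r + 1)) + Real.sign (m₂ (r + 1)))) :
    (∀ r, x r = -a / 4) ∧
    (∀ r, (deriv f (x r)) ^ 2 = a ^ 2 / 16) ∧
    a ^ 2 / 16 = ((1 / 2) * ((deriv f₁ (-a / 2)) ^ 2 + (deriv f₂ (-a / 2)) ^ 2)) / 4 ∧
    (1 / 2) * ((deriv f₁ (-a / 2)) ^ 2 + (deriv f₂ (-a / 2)) ^ 2) = a ^ 2 / 4 ∧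
    IsMinOn f Set.univ (-a / 2) ∧
    (∀ y, IsMinOn f Set.univ y → y = -a / 2) ∧
    (∀ r, deriv f (x r) ≠ 0) := by
  obtain ⟨hα0, hα1⟩ := hα
  have hb0 : (0:ℝ) ≤ 1 - α := by linarith
  have hb1 : 1 - α < 1 := by linarith
  -- key invariant
  have key : ∀ r, x r = -a / 4 ∧ m₁ r = -(a/4) * (1 - (1-α)^r) ∧
      m₂ r = (3*a/4) * (1 - (1-α)^r) := by
    intro r
    induction r with
    | zero => simp [hx0, hm₁0, hm₂0]
    | succ n ih =>
      obtain ⟨hxn, h1n, h2n⟩ := ih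
      have hpow : (1-α)^(n+1) < 1 := pow_lt_one₀ hb0 hb1 (Nat.succ_ne_zero n)
      have hm1 : m₁ (n+1) = -(a/4) * (1 - (1-α)^(n+1)) := by
        rw [hm₁ n, h1n, hxn]; ring
      have hm2 : m₂ (n+1) = (3*a/4) * (1 - (1-α)^(n+1)) := by
        rw [hm₂ n, h2n, hxn]; ring
      have hneg : m₁ (n+1) < 0 := by
        rw [hm1]; nlinarith
      have hpos : 0 < m₂ (n+1) := by
        rw [hm2]; nlinarith
      have hxn1 : x (n+1) = -a/4 := by
        rw [hx n, Real.sign_of_neg hneg, Real.sign_of_pos hpos, hxn]; ring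
      exact ⟨hxn1, hm1, hm2⟩
  have hxr : ∀ r, x r = -a / 4 := fun r => (key r).1
  -- derivative computations
  have hfeq : f = fun t => (t^2/2 + (t+a)^2/2)/2 := by
    funext t; rw [hf, hf₁, hf₂]
  have hdf : ∀ t, deriv f t = t + a/2 := by
    intro t
    have h1 : HasDerivAt (fun t:ℝ => t^2) ((2:ℕ) * t^1 * 1) t :=
      (hasDerivAt_id t).pow 2
    have h2 : HasDerivAt (fun t:ℝ => (t+a)^2) ((2:ℕ) * (t+a)^1 * 1) t :=
      ((hasDerivAt_id t).add_const a).pow 2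
    have h : HasDerivAt f (t + a/2) t := by
      rw [hfeq]
      have : HasDerivAt (fun t => (t^2/2 + (t+a)^2/2)/2)
          ((((2:ℕ):ℝ) * t ^ 1 * 1 / 2 + ((2:ℕ):ℝ) * (t + a) ^ 1 * 1 / 2) / 2) t :=
        ((h1.div_const 2).add (h2.div_const 2)).div_const 2
      convert this using 1
      push_cast; ring
    exact h.deriv
  have hdf₁ : deriv f₁ (-a/2) = -a/2 := by
    have hfe : f₁ = fun t => t^2/2 := funext hf₁
    have h : HasDerivAt f₁ (-a/2) (-a/2) := by
      rw [hfe]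
      have : HasDerivAt (fun t => t^2/2) (((2:ℕ):ℝ) * id (-a/2) ^ (2-1) * 1 / 2) (-a/2) :=
        ((hasDerivAt_id (-a/2)).pow 2).div_const 2
      convert this using 1
      simp only [id]; push_cast; ring
    exact h.deriv
  have hdf₂ : deriv f₂ (-a/2) = a/2 := by
    have hfe : f₂ = fun t => (t+a)^2/2 := funext hf₂
    have h : HasDerivAt f₂ (a/2) (-a/2) := by
      rw [hfe]
      have : HasDerivAt (fun t => (t+a)^2/2) (((2:ℕ):ℝ) * (id (-a/2) + a) ^ (2-1) * 1 / 2) (-a/2) :=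
        (((hasDerivAt_id (-a/2)).add_const a).pow 2).div_const 2
      convert this using 1
      simp only [id]; push_cast; ring
    exact h.deriv
  refine ⟨hxr, ?_, ?_, ?_, ?_, ?_, ?_⟩
  · intro r; rw [hxr r, hdf]; ring
  · rw [hdf₁, hdf₂]; ring
  · rw [hdf₁, hdf₂]; ring
  · rw [isMinOn_iff]
    intro y _
    simp only [hfeq]
    nlinarith [sq_nonneg (y + a/2)]
  · intro y hy
    have hle := hy (Set.mem_univ (-a/2))
    simp only [hfeq, Set.mem_setOf_eq] at hle
    have h0 : (y + a/2)^2 = 0 := le_antisymm (by nlinarith) (sq_nonneg _)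
    have := pow_eq_zero_iff (n := 2) (by norm_num) |>.mp h0
    linarith
  · intro r
    rw [hxr r, hdf]
    intro h; nlinarith
end

section
/- Let a > 0, α ∈ (0,1], η > 0. Define the one-dimensional LocalMuon recursion with two clients and loss functions f₁(x) = x²/2 and f₂(x) = (x+a)²/2, initialized at x⁽⁰⁾ = −a/4 with momenta m₁⁽⁰⁾ = m₂⁽⁰⁾ = 0, and updated by m₁⁽ʳ⁺¹⁾ = (1−α)m₁⁽ʳ⁾ + α·x⁽ʳ⁾, m₂⁽ʳ⁺¹⁾ = (1−α)m₂⁽ʳ⁾ + α·(x⁽ʳ⁾+a), x⁽ʳ⁺¹⁾ = x⁽ʳ⁾ − (η/2)·(sign(m₁⁽ʳ⁺¹⁾) + sign(m₂⁽ʳ⁺¹⁾)). Then for every r ≥ 0: x⁽ʳ⁾ = −a/4, m₁⁽ʳ⁾ = −(a/4)·(1 − (1−α)ʳ) and m₂⁽ʳ⁾ = (3a/4)·(1 − (1−α)ʳ); consequently, for every r ≥ 1, sign(m₁⁽ʳ⁾) + sign(m₂⁽ʳ⁾) = 0. -/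
theorem localMuon_iterates_stagnate (a α η : ℝ) (ha : 0 < a) (hα : α ∈ Set.Ioc (0 : ℝ) 1)
    (hη : 0 < η) (x m₁ m₂ : ℕ → ℝ)
    (hx0 : x 0 = -a / 4) (hm₁0 : m₁ 0 = 0) (hm₂0 : m₂ 0 = 0)
    (hm₁ : ∀ r, m₁ (r + 1) = (1 - α) * m₁ r + α * x r)
    (hm₂ : ∀ r, m₂ (r + 1) = (1 - α) * m₂ r + α * (x r + a))
    (hx : ∀ r, x (r + 1) =
      x r - (η / 2) * (Real.sign (m₁ (r + 1)) + Real.sign (m₂ (r + 1)))) :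
    (∀ r, x r = -a / 4) ∧
    (∀ r, m₁ r = -(a / 4) * (1 - (1 - α) ^ r)) ∧
    (∀ r, m₂ r = (3 * a / 4) * (1 - (1 - α) ^ r)) ∧
    (∀ r, 1 ≤ r → Real.sign (m₁ r) + Real.sign (m₂ r) = 0) := by
  obtain ⟨hα0, hα1⟩ := hα
  have h01 : (0:ℝ) ≤ 1 - α := by linarith
  have h11 : (1:ℝ) - α < 1 := by linarith
  have hpow : ∀ r : ℕ, (0:ℝ) < 1 - (1 - α) ^ (r + 1) := by
    intro r
    have h := pow_lt_one₀ h01 h11 (Nat.succ_ne_zero r)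
    rw [Nat.succ_eq_add_one] at h
    linarith
  have key : ∀ r, x r = -a / 4 ∧ m₁ r = -(a / 4) * (1 - (1 - α) ^ r) ∧
      m₂ r = (3 * a / 4) * (1 - (1 - α) ^ r) := by
    intro r
    induction r with
    | zero => simp [hx0, hm₁0, hm₂0]
    | succ r ih =>
      obtain ⟨ihx, ih1, ih2⟩ := ih
      have h1 : m₁ (r + 1) = -(a / 4) * (1 - (1 - α) ^ (r + 1)) := by
        rw [hm₁, ih1, ihx]; ring
      have h2 : m₂ (r + 1) = (3 * a / 4) * (1 - (1 - α) ^ (r + 1)) := by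
        rw [hm₂, ih2, ihx]; ring
      have hs1 : Real.sign (m₁ (r + 1)) = -1 := by
        apply Real.sign_of_neg
        rw [h1]
        have := hpow r
        nlinarith
      have hs2 : Real.sign (m₂ (r + 1)) = 1 := by
        apply Real.sign_of_pos
        rw [h2]
        have := hpow r
        nlinarith
      refine ⟨?_, h1, h2⟩
      rw [hx, hs1, hs2, ihx]; ring
  refine ⟨fun r => (key r).1, fun r => (key r).2.1, fun r => (key r).2.2, ?_⟩
  intro r hr
  obtain ⟨s, rfl⟩ := Nat.exists_eq_add_of_le hr
  have h1 := (key (1 + s)).2.1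
  have h2 := (key (1 + s)).2.2
  have hp := hpow s
  rw [Nat.add_comm] at h1 h2
  have hs1 : Real.sign (m₁ (1 + s)) = -1 := by
    apply Real.sign_of_neg
    rw [Nat.add_comm, h1]; nlinarith
  have hs2 : Real.sign (m₂ (1 + s)) = 1 := by
    apply Real.sign_of_pos
    rw [Nat.add_comm, h2]; nlinarith
  rw [hs1, hs2]; ring
end

section
/- Let φ(x) := (15/8)·x − (5/4)·x³ + (3/8)·x⁵. Then for every x ∈ [0, 1]: 0 ≤ 1 − φ(x) ≤ (1 − x)^{3/2}. -/
theorem newton_schulz_one_sub_bound (x : ℝ) (hx : x ∈ Set.Icc (0 : ℝ) 1) :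
    0 ≤ 1 - ((15/8) * x - (5/4) * x^3 + (3/8) * x^5) ∧
      1 - ((15/8) * x - (5/4) * x^3 + (3/8) * x^5) ≤ (1 - x) ^ ((3 : ℝ) / 2) := by
  obtain ⟨h0, h1⟩ := hx
  have ht : (0:ℝ) ≤ 1 - x := by linarith
  have hnn : 0 ≤ 1 - ((15/8) * x - (5/4) * x^3 + (3/8) * x^5) := by
    have h3 := pow_nonneg ht 3
    nlinarith [sq_nonneg x, mul_nonneg h0 ht]
  refine ⟨hnn, ?_⟩
  have hsqrt : (1 - x) ^ ((3:ℝ)/2) = Real.sqrt ((1 - x)^3) := by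
    rw [Real.sqrt_eq_rpow, ← Real.rpow_natCast (1 - x) 3, ← Real.rpow_mul ht]
    norm_num
  rw [hsqrt]
  apply (Real.le_sqrt hnn (pow_nonneg ht 3)).mpr
  have hq : 0 ≤ 48 + 111*x - 35*x^2 - 90*x^3 - 6*x^4 + 27*x^5 + 9*x^6 := by
    nlinarith [mul_nonneg h0 ht, mul_nonneg (mul_nonneg h0 h0) ht,
      mul_nonneg (mul_nonneg (mul_nonneg h0 h0) h0) ht,
      pow_nonneg h0 5, pow_nonneg h0 6]
  nlinarith [mul_nonneg (mul_nonneg (pow_nonneg ht 3) h0) hq]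
end

section
/- Let φ(x) := (15/8)·x − (5/4)·x³ + (3/8)·x⁵ and let φ^{[T]} denote the T-fold composition of φ (with φ^{[0]} the identity). Then for every natural number T and every x ∈ [0, 1]: 0 ≤ 1 − φ^{[T]}(x) ≤ (1 − x)^{(3/2)^T}. -/
lemma ns_phi_mem (y : ℝ) (hy : y ∈ Set.Icc (0:ℝ) 1) :
    (15/8) * y - (5/4) * y^3 + (3/8) * y^5 ∈ Set.Icc (0:ℝ) 1 := by
  obtain ⟨h0, h1⟩ := hy
  have hb : (0:ℝ) ≤ 1 - y := by linarith
  have hy2 : y^2 ≤ 1 := by nlinarith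
  have hy4 : y^4 ≤ 1 := by nlinarith
  constructor
  · have : 0 ≤ y * (15 - 10*y^2 + 3*y^4) := mul_nonneg h0 (by nlinarith [sq_nonneg (y^2)])
    nlinarith [this]
  · have hid : 1 - ((15/8) * y - (5/4) * y^3 + (3/8) * y^5)
        = (1-y)^3 * (3*y^2 + 9*y + 8) / 8 := by ring
    have hs : 0 ≤ 3*y^2 + 9*y + 8 := by nlinarith [sq_nonneg y]
    nlinarith [mul_nonneg (pow_nonneg hb 3) hs]

lemma ns_phi_sq (y : ℝ) (hy : y ∈ Set.Icc (0:ℝ) 1) :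
    (1 - ((15/8) * y - (5/4) * y^3 + (3/8) * y^5))^2 ≤ (1 - y)^3 := by
  obtain ⟨h0, h1⟩ := hy
  have hb : (0:ℝ) ≤ 1 - y := by linarith
  have h2 : y^2 ≤ y := by nlinarith
  have h3 : y^3 ≤ y := by nlinarith [sq_nonneg y]
  have h4 : y^4 ≤ y := by nlinarith [sq_nonneg y, sq_nonneg (y^2)]
  have h5 : 0 ≤ y^5 := by positivity
  have h6 : 0 ≤ y^6 := by positivity
  have hq : 0 ≤ 48 + 111*y - 35*y^2 - 90*y^3 - 6*y^4 + 27*y^5 + 9*y^6 := by linarith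
  have hid : (1 - y)^3 - (1 - ((15/8) * y - (5/4) * y^3 + (3/8) * y^5))^2
      = (1-y)^3 * (y * (48 + 111*y - 35*y^2 - 90*y^3 - 6*y^4 + 27*y^5 + 9*y^6)) / 64 := by
    ring
  have := mul_nonneg (pow_nonneg hb 3) (mul_nonneg h0 hq)
  linarith

lemma ns_phi_step (y : ℝ) (hy : y ∈ Set.Icc (0:ℝ) 1) :
    1 - ((15/8) * y - (5/4) * y^3 + (3/8) * y^5) ≤ (1 - y) ^ ((3:ℝ)/2) := by
  obtain ⟨h0, h1⟩ := hy
  have hb : (0:ℝ) ≤ 1 - y := by linarith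
  have hrpow : ((1 - y) ^ ((3:ℝ)/2))^2 = (1 - y)^3 := by
    rw [← Real.rpow_natCast ((1 - y) ^ ((3:ℝ)/2)) 2, ← Real.rpow_mul hb]
    norm_num
  have hsq := ns_phi_sq y ⟨h0, h1⟩
  have ha : 0 ≤ 1 - ((15/8) * y - (5/4) * y^3 + (3/8) * y^5) := by
    have := (ns_phi_mem y ⟨h0, h1⟩).2; linarith
  have hc : 0 ≤ (1 - y) ^ ((3:ℝ)/2) := Real.rpow_nonneg hb _
  nlinarith [hsq, hrpow, ha, hc]

theorem newton_schulz_iterated_bound (T : ℕ) (x : ℝ) (hx : x ∈ Set.Icc (0 : ℝ) 1) :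
    0 ≤ 1 - (fun t : ℝ => (15/8) * t - (5/4) * t^3 + (3/8) * t^5)^[T] x ∧
      1 - (fun t : ℝ => (15/8) * t - (5/4) * t^3 + (3/8) * t^5)^[T] x
        ≤ (1 - x) ^ (((3 : ℝ) / 2) ^ T) := by
  induction T generalizing x with
  | zero =>
    simp only [Function.iterate_zero, id_eq, pow_zero, Real.rpow_one]
    exact ⟨by linarith [hx.2], le_refl _⟩
  | succ T ih =>
    rw [Function.iterate_succ_apply]
    set y := (15/8) * x - (5/4) * x^3 + (3/8) * x^5 with hy
    have hymem : y ∈ Set.Icc (0:ℝ) 1 := ns_phi_mem x hx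
    obtain ⟨ih1, ih2⟩ := ih y hymem
    refine ⟨ih1, ?_⟩
    have hb : (0:ℝ) ≤ 1 - x := by linarith [hx.2]
    have hstep : 1 - y ≤ (1 - x) ^ ((3:ℝ)/2) := ns_phi_step x hx
    have he : (0:ℝ) ≤ ((3:ℝ)/2)^T := by positivity
    have h2 : (1 - y) ^ (((3:ℝ)/2)^T) ≤ ((1 - x) ^ ((3:ℝ)/2)) ^ (((3:ℝ)/2)^T) :=
      Real.rpow_le_rpow (by linarith [hymem.2]) hstep he
    have h3 : ((1 - x) ^ ((3:ℝ)/2)) ^ (((3:ℝ)/2)^T) = (1 - x) ^ (((3:ℝ)/2)^(T+1)) := by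
      rw [← Real.rpow_mul hb, pow_succ, mul_comm]
    calc 1 - (fun t : ℝ => (15/8) * t - (5/4) * t^3 + (3/8) * t^5)^[T] y
        ≤ (1 - y) ^ (((3:ℝ)/2)^T) := ih2
      _ ≤ ((1 - x) ^ ((3:ℝ)/2)) ^ (((3:ℝ)/2)^T) := h2
      _ = (1 - x) ^ (((3:ℝ)/2)^(T+1)) := h3
end

section
/- Let κ ∈ (0, 1) and let c ≥ 1 be a real number. Define p := 1 + log(1 − (1−κ)^c) / log κ. Then for every u ∈ [κ, 1]: 1 − (1−u)^c ≥ u^{p−1}. -/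
open Real Set

lemma aux_D_pos {c x : ℝ} (hc : 0 < c) (hx0 : 0 < x) (hx1 : x ≤ 1) :
    0 < 1 - (1 - x) ^ c := by
  rcases eq_or_lt_of_le hx1 with rfl | h
  · simp [Real.zero_rpow hc.ne']
  · have h1 : (1 - x) ^ c < 1 := Real.rpow_lt_one (by linarith) (by linarith) hc
    linarith

lemma aux_hasDerivAt_D {c x : ℝ} (hx : x ∈ Set.Ioo (0:ℝ) 1) :
    HasDerivAt (fun u : ℝ => 1 - (1 - u) ^ c) (c * (1 - x) ^ (c - 1)) x := by
  have h1 : HasDerivAt (fun u : ℝ => 1 - u) (-1) x := (hasDerivAt_id x).const_sub 1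
  have h2 := h1.rpow_const (p := c) (Or.inl (by simp; linarith [hx.2]))
  have h3 := h2.const_sub 1
  refine h3.congr_deriv ?_
  ring

lemma aux_hasDerivAt_N {c x : ℝ} (hx : x ∈ Set.Ioo (0:ℝ) 1) :
    HasDerivAt (fun u : ℝ => c * u * (1 - u) ^ (c - 1))
      (c * (1 - x) ^ (c - 1) + (c * x) * (-1 * (c - 1) * (1 - x) ^ (c - 1 - 1))) x := by
  have h1 : HasDerivAt (fun u : ℝ => 1 - u) (-1) x := (hasDerivAt_id x).const_sub 1
  have h2 := h1.rpow_const (p := c - 1) (Or.inl (by simp; linarith [hx.2]))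
  have h4 : HasDerivAt (fun u : ℝ => c * u) c x := by
    simpa using (hasDerivAt_id x).const_mul c
  exact h4.mul h2

noncomputable def hfun (c : ℝ) : ℝ → ℝ :=
  fun x => c * x * (1 - x) ^ (c - 1) / (1 - (1 - x) ^ c)

lemma aux_hasDerivAt_h {c x : ℝ} (hc : 1 ≤ c) (hx : x ∈ Set.Ioo (0:ℝ) 1) :
    HasDerivAt (hfun c)
      (((c * (1 - x) ^ (c - 1) + (c * x) * (-1 * (c - 1) * (1 - x) ^ (c - 1 - 1)))
          * (1 - (1 - x) ^ c)
        - (c * x * (1 - x) ^ (c - 1)) * (c * (1 - x) ^ (c - 1)))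
        / (1 - (1 - x) ^ c) ^ 2) x := by
  exact (aux_hasDerivAt_N hx).div (aux_hasDerivAt_D hx)
    (aux_D_pos (by linarith) hx.1 hx.2.le).ne'

lemma aux_h_antitone {c : ℝ} (hc : 1 ≤ c) : AntitoneOn (hfun c) (Set.Ioo (0:ℝ) 1) := by
  have hc0 : (0:ℝ) < c := by linarith
  have hint : interior (Set.Ioo (0:ℝ) 1) = Set.Ioo (0:ℝ) 1 := isOpen_Ioo.interior_eq
  apply antitoneOn_of_deriv_nonpos (convex_Ioo 0 1)
  · intro x hx
    exact (aux_hasDerivAt_h hc hx).differentiableAt.continuousAt.continuousWithinAt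

  · rw [hint]
    intro x hx
    exact (aux_hasDerivAt_h hc hx).differentiableAt.differentiableWithinAt
  · rw [hint]
    intro x hx
    rw [(aux_hasDerivAt_h hc hx).deriv]
    obtain ⟨hx0, hx1⟩ := hx
    have ht : (0:ℝ) < 1 - x := by linarith
    set A := (1 - x) ^ (c - 1 - 1) with hA
    have hApos : 0 < A := Real.rpow_pos_of_pos ht _
    have e1 : (1 - x) ^ (c - 1) = A * (1 - x) := by
      rw [hA]
      rw [show c - 1 = (c - 1 - 1) + 1 by ring, Real.rpow_add ht, Real.rpow_one]
      ring_nf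
    have e2 : (1 - x) ^ c = A * (1 - x) * (1 - x) := by
      rw [hA]
      rw [show c = (c - 1 - 1) + 1 + 1 by ring, Real.rpow_add ht, Real.rpow_add ht,
        Real.rpow_one]
      ring_nf
    have ber : 1 + c * (-x) ≤ (1 + (-x)) ^ c := one_add_mul_self_le_rpow_one_add (by linarith) hc
    rw [show (1:ℝ) + -x = 1 - x by ring] at ber
    rw [e2] at ber
    have hDpos : 0 < 1 - A * (1 - x) * (1 - x) := by
      have := aux_D_pos hc0 hx0 hx1.le
      rwa [e2] at this
    apply div_nonpos_of_nonpos_of_nonneg _ (sq_nonneg _)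
    rw [e1, e2]
    nlinarith [mul_le_mul_of_nonneg_left ber (mul_pos hc0 hApos).le]

lemma aux_key (κ c : ℝ) (hκ0 : 0 < κ) (hκ1 : κ < 1) (hc : 1 ≤ c) :
    ∀ u ∈ Set.Icc κ 1,
      Real.log (1 - (1 - κ) ^ c) / Real.log κ * Real.log u ≤ Real.log (1 - (1 - u) ^ c) := by
  have hc0 : (0:ℝ) < c := by linarith
  have hlogκ : Real.log κ < 0 := Real.log_neg hκ0 hκ1
  set α := Real.log (1 - (1 - κ) ^ c) / Real.log κ with hαdef
  set F : ℝ → ℝ := fun u => Real.log (1 - (1 - u) ^ c) - α * Real.log u with hF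
  have hFκ : F κ = 0 := by
    simp only [hF, hαdef]
    rw [div_mul_cancel₀ _ hlogκ.ne]
    ring
  have hF1 : F 1 = 0 := by
    simp [hF, Real.zero_rpow hc0.ne']
  have hcontF : ContinuousOn F (Set.Icc κ 1) := by
    intro x hx
    have hx0 : 0 < x := lt_of_lt_of_le hκ0 hx.1
    have hD := aux_D_pos hc0 hx0 hx.2
    have h1 : ContinuousAt (fun u : ℝ => (1 - u) ^ c) x :=
      (Real.continuousAt_rpow_const (1 - x) c (Or.inr hc0.le)).comp
        ((continuous_const.sub continuous_id).continuousAt)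
    have h2 : ContinuousAt (fun u : ℝ => 1 - (1 - u) ^ c) x :=
      continuous_const.continuousAt.sub h1
    have h3a : ContinuousAt (fun u : ℝ => Real.log (1 - (1 - u) ^ c)) x :=
      h2.log hD.ne'
    have h3b : ContinuousAt (fun u : ℝ => α * Real.log u) x :=
      (Real.continuousAt_log hx0.ne').const_mul α
    exact (h3a.sub h3b).continuousWithinAt
  have hFderiv : ∀ x ∈ Set.Ioo (0:ℝ) 1, HasDerivAt F ((hfun c x - α) / x) x := by
    intro x hx
    have hD := aux_D_pos hc0 hx.1 hx.2.le
    have h1 : HasDerivAt (fun u : ℝ => Real.log (1 - (1 - u) ^ c))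
        (c * (1 - x) ^ (c - 1) / (1 - (1 - x) ^ c)) x := (aux_hasDerivAt_D hx).log hD.ne'
    have h2 : HasDerivAt (fun u : ℝ => α * Real.log u) (α * x⁻¹) x :=
      (Real.hasDerivAt_log hx.1.ne').const_mul α
    have h3 := h1.sub h2
    refine HasDerivAt.congr_deriv (f := F) h3 ?_
    unfold hfun
    have hDne : (1 - (1 - x) ^ c) ≠ 0 := hD.ne'
    field_simp [hx.1.ne', hDne]
  intro u hu
  obtain ⟨hu1, hu2⟩ := hu
  suffices h : 0 ≤ F u by
    have := h
    simp only [hF] at this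
    linarith
  rcases eq_or_lt_of_le hu2 with rfl | hu2'
  · exact hF1.ge
  rcases eq_or_lt_of_le hu1 with rfl | hu1'
  · exact hFκ.ge
  have huI : u ∈ Set.Ioo (0:ℝ) 1 := ⟨lt_trans hκ0 hu1', hu2'⟩
  by_cases hcase : α ≤ hfun c u
  · have hsub : Set.Icc κ u ⊆ Set.Icc κ 1 := Set.Icc_subset_Icc le_rfl hu2'.le
    have hM : MonotoneOn F (Set.Icc κ u) := by
      apply monotoneOn_of_deriv_nonneg (convex_Icc κ u) (hcontF.mono hsub)
      · rw [interior_Icc]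
        intro x hx
        have hxI : x ∈ Set.Ioo (0:ℝ) 1 := ⟨lt_trans hκ0 hx.1, lt_trans hx.2 hu2'⟩
        exact (hFderiv x hxI).differentiableAt.differentiableWithinAt
      · rw [interior_Icc]
        intro x hx
        have hxI : x ∈ Set.Ioo (0:ℝ) 1 := ⟨lt_trans hκ0 hx.1, lt_trans hx.2 hu2'⟩
        rw [(hFderiv x hxI).deriv]
        have hmon : hfun c u ≤ hfun c x := aux_h_antitone hc hxI huI hx.2.le
        exact div_nonneg (by linarith) hxI.1.le
    have := hM ⟨le_rfl, hu1'.le⟩ ⟨hu1'.le, le_rfl⟩ hu1'.le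
    linarith
  · push_neg at hcase
    have hsub : Set.Icc u 1 ⊆ Set.Icc κ 1 := Set.Icc_subset_Icc hu1'.le le_rfl
    have hM : AntitoneOn F (Set.Icc u 1) := by
      apply antitoneOn_of_deriv_nonpos (convex_Icc u 1) (hcontF.mono hsub)
      · rw [interior_Icc]
        intro x hx
        have hxI : x ∈ Set.Ioo (0:ℝ) 1 := ⟨lt_trans huI.1 hx.1, hx.2⟩
        exact (hFderiv x hxI).differentiableAt.differentiableWithinAt
      · rw [interior_Icc]
        intro x hx
        have hxI : x ∈ Set.Ioo (0:ℝ) 1 := ⟨lt_trans huI.1 hx.1, hx.2⟩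
        rw [(hFderiv x hxI).deriv]
        have hmon : hfun c x ≤ hfun c u := aux_h_antitone hc huI hxI hx.1.le
        apply div_nonpos_of_nonpos_of_nonneg (by linarith) hxI.1.le
    have := hM ⟨le_rfl, hu2'.le⟩ ⟨hu2'.le, le_rfl⟩ hu2'.le
    linarith

theorem one_sub_pow_ge_rpow (κ c : ℝ) (hκ : κ ∈ Set.Ioo (0 : ℝ) 1) (hc : 1 ≤ c)
    (p : ℝ) (hp : p = 1 + Real.log (1 - (1 - κ) ^ c) / Real.log κ) :
    ∀ u ∈ Set.Icc κ 1, 1 - (1 - u) ^ c ≥ u ^ (p - 1) := by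
  intro u hu
  have hc0 : (0:ℝ) < c := by linarith
  have hu0 : 0 < u := lt_of_lt_of_le hκ.1 hu.1
  have hD := aux_D_pos hc0 hu0 hu.2
  have hkey := aux_key κ c hκ.1 hκ.2 hc u hu
  have hpα : p - 1 = Real.log (1 - (1 - κ) ^ c) / Real.log κ := by rw [hp]; ring
  calc u ^ (p - 1) = Real.exp ((p - 1) * Real.log u) := by
        rw [Real.rpow_def_of_pos hu0, mul_comm]
    _ ≤ Real.exp (Real.log (1 - (1 - u) ^ c)) := by
        apply Real.exp_le_exp.2
        rw [hpα]
        exact hkey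
    _ = 1 - (1 - u) ^ c := Real.exp_log hD
end

section
/- Let T be a natural number and set c := (3/2)^T. Let m ≥ 2 be a natural number and let s : Fin m → ℝ satisfy s_i > 0 for all i. Define F := sqrt(Σ_i s_i²), κ := (min_i s_i)/F (so that 0 < κ < 1), and p := 1 + log(1 − (1−κ)^c) / log κ. Then Σ_i s_i · (1 − (1 − s_i/F)^c) ≥ (Σ_i s_i^p)^{1/p}. -/
open Real Set

private lemma f_pos {c y : ℝ} (hc : 0 < c) (hy0 : 0 < y) (hy1 : y < 1) :
    0 < 1 - (1 - y) ^ c := by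
  have h1 : (1 - y : ℝ) ^ c < 1 := Real.rpow_lt_one (by linarith) (by linarith) hc
  linarith

private lemma hasDerivAt_f (c : ℝ) {y : ℝ} (hy1 : y < 1) :
    HasDerivAt (fun z : ℝ => 1 - (1 - z) ^ c) (c * (1 - y) ^ (c - 1)) y := by
  have h1 : HasDerivAt (fun z : ℝ => 1 - z) (-1) y := (hasDerivAt_id y).const_sub 1
  have h2 : HasDerivAt (fun z : ℝ => (1 - z) ^ c) ((-1) * c * (1 - y) ^ (c - 1)) y :=
    h1.rpow_const (Or.inl (by show (1 - y : ℝ) ≠ 0; exact ne_of_gt (by linarith)))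
  have h3 := h2.const_sub 1
  convert h3 using 1
  · rfl
  · rfl
  · ring

private lemma hasDerivAt_psi {c q : ℝ} (hc : 0 < c) {y : ℝ} (hy0 : 0 < y) (hy1 : y < 1) :
    HasDerivAt (fun z : ℝ => Real.log (1 - (1 - z) ^ c) - q * Real.log z)
      (c * (1 - y) ^ (c - 1) / (1 - (1 - y) ^ c) - q / y) y := by
  have hf := (hasDerivAt_f c hy1).log (ne_of_gt (f_pos hc hy0 hy1))
  have hg := (Real.hasDerivAt_log (ne_of_gt hy0)).const_mul q
  exact hf.sub hg

private lemma deriv_N_nonpos {c : ℝ} (hc : 1 ≤ c) {y : ℝ} (hy0 : 0 < y) (hy1 : y < 1) :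
    1 / y - (c - 1) / (1 - y) - c * (1 - y) ^ (c - 1) / (1 - (1 - y) ^ c) ≤ 0 := by
  have hc0 : (0 : ℝ) < c := by linarith
  have h1y : (0 : ℝ) < 1 - y := by linarith
  have hv0 : 0 < (1 - y) ^ c := Real.rpow_pos_of_pos h1y c
  have hv1 : (1 - y) ^ c < 1 := Real.rpow_lt_one (by linarith) (by linarith) hc0
  have hb : 1 - c * y ≤ (1 - y) ^ c := by
    have := one_add_mul_self_le_rpow_one_add (s := -y) (by linarith) hc
    rw [show (1 : ℝ) + -y = 1 - y by ring] at this
    linarith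
  have hcc : (1 - y) ^ (c - 1) = (1 - y) ^ c / (1 - y) := by
    rw [Real.rpow_sub h1y, Real.rpow_one]
  rw [hcc, sub_sub, sub_nonpos]
  set v := (1 - y) ^ c with hv
  have hfv : 0 < 1 - v := by linarith
  have key : 1 / y ≤ (c - 1) / (1 - y) + c * (v / (1 - y)) / (1 - v) := by
    rw [div_le_iff₀ hy0]
    have expand : ((c - 1) / (1 - y) + c * (v / (1 - y)) / (1 - v)) * y
        = ((c - 1) * (1 - v) + c * v) * y / ((1 - y) * (1 - v)) := by
      field_simp
    rw [expand, le_div_iff₀ (by positivity)]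
    nlinarith [hb]
  linarith [key]

private lemma E_antitone {c : ℝ} (hc : 1 ≤ c) {y x : ℝ} (hy0 : 0 < y) (hyx : y ≤ x)
    (hx1 : x < 1) :
    c * x * (1 - x) ^ (c - 1) / (1 - (1 - x) ^ c)
      ≤ c * y * (1 - y) ^ (c - 1) / (1 - (1 - y) ^ c) := by
  have hc0 : (0 : ℝ) < c := by linarith
  set N : ℝ → ℝ := fun z => Real.log z + (c - 1) * Real.log (1 - z)
      - Real.log (1 - (1 - z) ^ c) with hN
  have hder : ∀ z ∈ Ioo (0 : ℝ) 1, HasDerivAt N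
      (1 / z - (c - 1) / (1 - z) - c * (1 - z) ^ (c - 1) / (1 - (1 - z) ^ c)) z := by
    intro z hz
    have h1 : HasDerivAt (fun w : ℝ => Real.log w) z⁻¹ z := Real.hasDerivAt_log (ne_of_gt hz.1)
    have h2 : HasDerivAt (fun w : ℝ => 1 - w) (-1) z := (hasDerivAt_id z).const_sub 1
    have h3 := (h2.log (by show (1 - z : ℝ) ≠ 0; exact ne_of_gt (by linarith [hz.2]))).const_mul (c - 1)
    have h4 := (hasDerivAt_f c hz.2).log (ne_of_gt (f_pos hc0 hz.1 hz.2))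
    have h5 := (h1.add h3).sub h4
    convert h5 using 1
    · rfl
    · rfl
    · rfl
    · ring
  have hanti : AntitoneOn N (Ioo 0 1) := by
    apply antitoneOn_of_deriv_nonpos (convex_Ioo 0 1)
    · exact fun z hz => ((hder z hz).continuousAt).continuousWithinAt
    · rw [interior_Ioo]
      exact fun z hz => (hder z hz).differentiableAt.differentiableWithinAt
    · rw [interior_Ioo]
      intro z hz
      rw [(hder z hz).deriv]
      exact deriv_N_nonpos hc hz.1 hz.2
  have hy1 : y < 1 := lt_of_le_of_lt hyx hx1
  have hx0 : 0 < x := lt_of_lt_of_le hy0 hyx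
  have hNxy : N x ≤ N y := hanti ⟨hy0, hy1⟩ ⟨hx0, hx1⟩ hyx
  have hElog : ∀ z ∈ Ioo (0 : ℝ) 1,
      Real.log (c * z * (1 - z) ^ (c - 1) / (1 - (1 - z) ^ c)) = Real.log c + N z := by
    intro z hz
    have hz0 : (0 : ℝ) < z := hz.1
    have h1z : (0 : ℝ) < 1 - z := by linarith [hz.2]
    have hp : (0 : ℝ) < (1 - z) ^ (c - 1) := Real.rpow_pos_of_pos h1z _
    rw [Real.log_div (ne_of_gt (by positivity)) (ne_of_gt (f_pos hc0 hz.1 hz.2)),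
      Real.log_mul (ne_of_gt (by positivity)) (ne_of_gt hp),
      Real.log_mul (ne_of_gt hc0) (ne_of_gt hz0), Real.log_rpow h1z]
    simp [hN]
    ring
  have hEx : 0 < c * x * (1 - x) ^ (c - 1) / (1 - (1 - x) ^ c) := by
    have := f_pos hc0 hx0 hx1
    have := Real.rpow_pos_of_pos (show (0:ℝ) < 1 - x by linarith) (c - 1)
    positivity
  have hEy : 0 < c * y * (1 - y) ^ (c - 1) / (1 - (1 - y) ^ c) := by
    have := f_pos hc0 hy0 hy1
    have := Real.rpow_pos_of_pos (show (0:ℝ) < 1 - y by linarith) (c - 1)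
    positivity
  rw [← Real.log_le_log_iff hEx hEy, hElog x ⟨hx0, hx1⟩, hElog y ⟨hy0, hy1⟩]
  linarith [hNxy]

private lemma crux {c q κ x : ℝ} (hc : 1 ≤ c) (hκ0 : 0 < κ) (hκ1 : κ < 1)
    (hq : q = Real.log (1 - (1 - κ) ^ c) / Real.log κ)
    (hx : κ ≤ x) (hx1 : x < 1) :
    x ^ q ≤ 1 - (1 - x) ^ c := by
  have hc0 : (0 : ℝ) < c := by linarith
  have hx0 : 0 < x := lt_of_lt_of_le hκ0 hx
  have hfx : 0 < 1 - (1 - x) ^ c := f_pos hc0 hx0 hx1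
  have hlogκ : Real.log κ < 0 := Real.log_neg hκ0 hκ1
  set ψ : ℝ → ℝ := fun z => Real.log (1 - (1 - z) ^ c) - q * Real.log z with hψ
  have hψκ : ψ κ = 0 := by
    simp only [hψ]
    rw [hq, div_mul_cancel₀ _ (ne_of_lt hlogκ), sub_self]
  suffices h : 0 ≤ ψ x by
    have hkey : q * Real.log x ≤ Real.log (1 - (1 - x) ^ c) := by
      simp only [hψ] at h; linarith
    rw [Real.rpow_def_of_pos hx0]
    calc Real.exp (Real.log x * q) ≤ Real.exp (Real.log (1 - (1 - x) ^ c)) := by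
          apply Real.exp_le_exp.mpr; linarith [hkey]
      _ = 1 - (1 - x) ^ c := Real.exp_log hfx
  -- E at x
  by_cases hEx : q ≤ c * x * (1 - x) ^ (c - 1) / (1 - (1 - x) ^ c)
  · -- ψ is monotone on [κ, x]
    have hmono : MonotoneOn ψ (Icc κ x) := by
      apply monotoneOn_of_deriv_nonneg (convex_Icc κ x)
      · intro z hz
        have hz0 : 0 < z := lt_of_lt_of_le hκ0 hz.1
        have hz1 : z < 1 := lt_of_le_of_lt hz.2 hx1
        exact (hasDerivAt_psi hc0 hz0 hz1).continuousAt.continuousWithinAt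
      · rw [interior_Icc]
        intro z hz
        have hz0 : 0 < z := lt_trans hκ0 hz.1
        have hz1 : z < 1 := lt_trans hz.2 hx1
        exact (hasDerivAt_psi hc0 hz0 hz1).differentiableAt.differentiableWithinAt
      · rw [interior_Icc]
        intro z hz
        have hz0 : 0 < z := lt_trans hκ0 hz.1
        have hz1 : z < 1 := lt_trans hz.2 hx1
        rw [(hasDerivAt_psi hc0 hz0 hz1).deriv]
        have hEz : q ≤ c * z * (1 - z) ^ (c - 1) / (1 - (1 - z) ^ c) :=
          le_trans hEx (E_antitone hc hz0 (le_of_lt hz.2) hx1)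
        have h2 : q / z ≤ c * (1 - z) ^ (c - 1) / (1 - (1 - z) ^ c) := by
          rw [div_le_iff₀ hz0]
          calc q ≤ c * z * (1 - z) ^ (c - 1) / (1 - (1 - z) ^ c) := hEz
            _ = c * (1 - z) ^ (c - 1) / (1 - (1 - z) ^ c) * z := by ring
        linarith
    have := hmono (left_mem_Icc.mpr hx) (right_mem_Icc.mpr hx) hx
    rw [hψκ] at this
    exact this
  · -- ψ is antitone on [x, 1]
    push_neg at hEx
    have hψ1 : ψ 1 = 0 := by
      simp [hψ, Real.zero_rpow (ne_of_gt hc0)]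
    have hanti : AntitoneOn ψ (Icc x 1) := by
      apply antitoneOn_of_deriv_nonpos (convex_Icc x 1)
      · -- continuity on Icc x 1
        have hcont1 : ContinuousOn (fun z : ℝ => 1 - (1 - z) ^ c) (Icc x 1) := by
          apply continuousOn_const.sub
          apply ContinuousOn.rpow_const (continuous_const.sub continuous_id).continuousOn
          intro z _
          exact Or.inr (le_of_lt hc0)
        have hne : ∀ z ∈ Icc x 1, (1 : ℝ) - (1 - z) ^ c ≠ 0 := by
          intro z hz
          rcases eq_or_lt_of_le hz.2 with h | h
          · subst h
            simp [Real.zero_rpow (ne_of_gt hc0)]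
          · exact ne_of_gt (f_pos hc0 (lt_of_lt_of_le hx0 hz.1) h)
        have hcont2 : ContinuousOn (fun z : ℝ => q * Real.log z) (Icc x 1) :=
          continuousOn_const.mul (ContinuousOn.log continuousOn_id
            (fun z hz => ne_of_gt (lt_of_lt_of_le hx0 hz.1)))
        exact (hcont1.log hne).sub hcont2
      · rw [interior_Icc]
        intro z hz
        have hz0 : 0 < z := lt_trans hx0 hz.1
        exact (hasDerivAt_psi hc0 hz0 hz.2).differentiableAt.differentiableWithinAt
      · rw [interior_Icc]
        intro z hz
        have hz0 : 0 < z := lt_trans hx0 hz.1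
        rw [(hasDerivAt_psi hc0 hz0 hz.2).deriv]
        have hEz : c * z * (1 - z) ^ (c - 1) / (1 - (1 - z) ^ c) ≤ q :=
          le_of_lt (lt_of_le_of_lt (E_antitone hc hx0 (le_of_lt hz.1) hz.2) hEx)
        have h2 : c * (1 - z) ^ (c - 1) / (1 - (1 - z) ^ c) ≤ q / z := by
          rw [le_div_iff₀ hz0]
          calc c * (1 - z) ^ (c - 1) / (1 - (1 - z) ^ c) * z
              = c * z * (1 - z) ^ (c - 1) / (1 - (1 - z) ^ c) := by ring
            _ ≤ q := hEz
        linarith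
    have := hanti (left_mem_Icc.mpr (le_of_lt hx1)) (right_mem_Icc.mpr (le_of_lt hx1))
      (le_of_lt hx1)
    rw [hψ1] at this
    exact this

theorem inexact_lmo_scalar_core (T m : ℕ) (hm : 2 ≤ m) (s : Fin m → ℝ)
    (hs : ∀ i, 0 < s i)
    (c F κ p : ℝ)
    (hc : c = ((3 : ℝ) / 2) ^ T)
    (hF : F = Real.sqrt (∑ i, s i ^ 2))
    (hκdef : κ = (⨅ i, s i) / F)
    (hpdef : p = 1 + Real.log (1 - (1 - κ) ^ c) / Real.log κ) :
    0 < κ ∧ κ < 1 ∧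
      ∑ i, s i * (1 - (1 - s i / F) ^ c) ≥ (∑ i, s i ^ p) ^ (1 / p) := by
  haveI : Nonempty (Fin m) := ⟨⟨0, by omega⟩⟩
  have hc1 : 1 ≤ c := by
    rw [hc]; exact one_le_pow₀ (by norm_num)
  have hc0 : 0 < c := by linarith
  -- argmin
  obtain ⟨i₀, hi₀⟩ := Finite.exists_min s
  have hinf : (⨅ i, s i) = s i₀ := by
    apply le_antisymm
    · exact ciInf_le (Set.Finite.bddBelow (Set.finite_range s)) i₀
    · exact le_ciInf hi₀
  -- F positive
  have hsum2 : 0 < ∑ i, s i ^ 2 :=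
    Finset.sum_pos (fun i _ => pow_pos (hs i) 2) ⟨i₀, Finset.mem_univ i₀⟩
  have hF0 : 0 < F := by rw [hF]; exact Real.sqrt_pos.mpr hsum2
  have hF2 : F ^ 2 = ∑ i, s i ^ 2 := by
    rw [hF, Real.sq_sqrt (le_of_lt hsum2)]
  -- each s i < F
  have hsiF : ∀ i, s i < F := by
    intro i
    have hj : ∃ j, j ≠ i := by
      rcases Nat.lt_or_ge 0 i.val with h | h
      · exact ⟨⟨0, by omega⟩, fun hh => by simp [Fin.ext_iff] at hh; omega⟩
      · exact ⟨⟨1, by omega⟩, fun hh => by simp [Fin.ext_iff] at hh; omega⟩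
    obtain ⟨j, hj⟩ := hj
    have hsub : ({i, j} : Finset (Fin m)) ⊆ Finset.univ := Finset.subset_univ _
    have hpair : s i ^ 2 + s j ^ 2 ≤ ∑ k, s k ^ 2 := by
      calc s i ^ 2 + s j ^ 2 = ∑ k ∈ ({i, j} : Finset (Fin m)), s k ^ 2 :=
            (Finset.sum_pair (f := fun k => s k ^ 2) (Ne.symm hj)).symm
        _ ≤ ∑ k, s k ^ 2 :=
            Finset.sum_le_sum_of_subset_of_nonneg hsub (fun k _ _ => sq_nonneg (s k))
    have hlt : s i ^ 2 < F ^ 2 := by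
      rw [hF2]
      have := sq_nonneg (s j)
      nlinarith [hs j]
    exact lt_of_pow_lt_pow_left₀ 2 (le_of_lt hF0) hlt
  have hκ : κ = s i₀ / F := by rw [hκdef, hinf]
  have hκ0 : 0 < κ := by rw [hκ]; exact div_pos (hs i₀) hF0
  have hκ1 : κ < 1 := by rw [hκ]; exact (div_lt_one hF0).mpr (hsiF i₀)
  refine ⟨hκ0, hκ1, ?_⟩
  set q : ℝ := Real.log (1 - (1 - κ) ^ c) / Real.log κ with hqdef
  have hp : p = 1 + q := hpdef
  have hlogκ : Real.log κ < 0 := Real.log_neg hκ0 hκ1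
  have hfκ0 : 0 < 1 - (1 - κ) ^ c := f_pos hc0 hκ0 hκ1
  have hfκ1 : 1 - (1 - κ) ^ c < 1 := by
    have : 0 < (1 - κ) ^ c := Real.rpow_pos_of_pos (by linarith) c
    linarith
  have hq0 : 0 < q := by
    rw [hqdef]
    exact div_pos_of_neg_of_neg (Real.log_neg hfκ0 hfκ1) hlogκ
  have hq1 : q ≤ 1 := by
    rw [hqdef, div_le_one_iff]
    right; right
    constructor
    · exact hlogκ
    · apply Real.log_le_log hκ0
      have h1 : (1 - κ) ^ c ≤ (1 - κ) ^ (1 : ℝ) :=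
        Real.rpow_le_rpow_of_exponent_ge (by linarith) (by linarith) hc1
      rw [Real.rpow_one] at h1
      linarith
  have hp1 : 1 ≤ p := by rw [hp]; linarith
  have hp0 : 0 < p := by linarith
  have hp2 : p ≤ 2 := by rw [hp]; linarith
  -- normalized values
  have hx0 : ∀ i, 0 < s i / F := fun i => div_pos (hs i) hF0
  have hx1 : ∀ i, s i / F < 1 := fun i => (div_lt_one hF0).mpr (hsiF i)
  have hxκ : ∀ i, κ ≤ s i / F := fun i => by
    rw [hκ]; exact (div_le_div_iff_of_pos_right hF0).mpr (hi₀ i)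
  -- pointwise bound
  have hpt : ∀ i, s i * (s i / F) ^ q ≤ s i * (1 - (1 - s i / F) ^ c) := fun i =>
    mul_le_mul_of_nonneg_left (crux hc1 hκ0 hκ1 hqdef (hxκ i) (hx1 i)) (le_of_lt (hs i))
  -- rewrite s i * (s i / F)^q = F * (s i / F) ^ p
  have hrw : ∀ i, s i * (s i / F) ^ q = F * (s i / F) ^ p := by
    intro i
    rw [hp, Real.rpow_add (hx0 i), Real.rpow_one]
    field_simp
  -- S := ∑ (s i / F) ^ p ≥ 1
  set S : ℝ := ∑ i, (s i / F) ^ p with hS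
  have hsum_sq : ∑ i, (s i / F) ^ (2 : ℝ) = 1 := by
    have : ∀ i, (s i / F) ^ (2 : ℝ) = s i ^ 2 / F ^ 2 := by
      intro i
      rw [show ((2 : ℝ)) = ((2 : ℕ) : ℝ) by norm_num, Real.rpow_natCast, div_pow]
    rw [Finset.sum_congr rfl (fun i _ => this i), ← Finset.sum_div, ← hF2, div_self]
    positivity
  have hS1 : 1 ≤ S := by
    rw [← hsum_sq, hS]
    apply Finset.sum_le_sum
    intro i _
    exact Real.rpow_le_rpow_of_exponent_ge (hx0 i) (le_of_lt (hx1 i)) hp2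
  -- ∑ s i ^ p = F ^ p * S
  have hFS : ∑ i, s i ^ p = F ^ p * S := by
    rw [hS, Finset.mul_sum]
    apply Finset.sum_congr rfl
    intro i _
    rw [← Real.mul_rpow (le_of_lt hF0) (le_of_lt (hx0 i))]
    congr 1
    field_simp
  -- final chain
  have hS0 : (0 : ℝ) ≤ S := by linarith
  have hchain : (∑ i, s i ^ p) ^ (1 / p) ≤ F * S := by
    have h1 : (F ^ p) ^ (1 / p) = F := by
      rw [← Real.rpow_mul (le_of_lt hF0), mul_one_div, div_self (ne_of_gt hp0), Real.rpow_one]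
    have h2 : S ^ (1 / p) ≤ S := by
      have hle : 1 / p ≤ 1 := by rw [div_le_one hp0]; linarith
      calc S ^ (1 / p) ≤ S ^ (1 : ℝ) := Real.rpow_le_rpow_of_exponent_le hS1 hle
        _ = S := Real.rpow_one S
    rw [hFS, Real.mul_rpow (Real.rpow_nonneg (le_of_lt hF0) p) hS0, h1]
    exact mul_le_mul_of_nonneg_left h2 (le_of_lt hF0)
  calc (∑ i, s i ^ p) ^ (1 / p) ≤ F * S := hchain
    _ = ∑ i, s i * (s i / F) ^ q := by
        rw [hS, Finset.mul_sum]
        exact Finset.sum_congr rfl (fun i _ => (hrw i).symm)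
    _ ≤ ∑ i, s i * (1 - (1 - s i / F) ^ c) := Finset.sum_le_sum (fun i _ => hpt i)
end

section
/- Let G be a nonzero real m × n matrix and define the Newton–Schulz iterates by G₀ := G / ‖G‖_F and G_{t+1} := (15/8)·G_t − (5/4)·(G_t·G_tᵀ)·G_t + (3/8)·(G_t·G_tᵀ)·(G_t·G_tᵀ)·G_t. Then for every natural number T: ‖G‖_F ≤ trace(Gᵀ·G_T) ≤ ‖G‖_trace, where ‖G‖_trace := Σ_i σ_i(G) is the sum of the singular values of G. Equivalently, −‖G‖_trace ≤ ⟨G, −G_T⟩ ≤ −‖G‖_F, where ⟨A,B⟩ := trace(Aᵀ·B) is the Frobenius inner product. -/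
open Matrix

/-- The trace norm (nuclear norm) of a real matrix: the sum of its singular values,
the square roots of the eigenvalues of the positive semidefinite matrix `Aᵀ * A`. -/
noncomputable def traceNorm {m n : ℕ} (A : Matrix (Fin m) (Fin n) ℝ) : ℝ :=
  ∑ i, Real.sqrt
    ((show (Aᵀ * A).IsHermitian by
        simpa [Matrix.conjTranspose_eq_transpose_of_trivial] using
          Matrix.isHermitian_conjTranspose_mul_self A).eigenvalues i)

noncomputable def nsAux (c l : ℝ) : ℕ → ℝ
  | 0 => c⁻¹
  | t + 1 => 15/8 * nsAux c l t - 5/4 * (nsAux c l t)^3 * l + 3/8 * (nsAux c l t)^5 * l^2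

lemma ns_scalar_low (x : ℝ) (h0 : 0 ≤ x) (h1 : x ≤ 1) :
    x ≤ 15/8*x - 5/4*x^3 + 3/8*x^5 := by
  nlinarith [mul_nonneg h0 (sq_nonneg (1-x^2)), sq_nonneg x]

lemma ns_scalar_high (x : ℝ) (h0 : 0 ≤ x) (h1 : x ≤ 1) :
    15/8*x - 5/4*x^3 + 3/8*x^5 ≤ 1 := by
  nlinarith [pow_nonneg (sub_nonneg.2 h1) 3, sq_nonneg x]

lemma ns_cube {m n : ℕ} (G : Matrix (Fin m) (Fin n) ℝ) (U : Matrix (Fin n) (Fin n) ℝ)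
    (lam f : Fin n → ℝ)
    (hU : ∀ X : Matrix (Fin n) (Fin n) ℝ, Uᵀ * (U * X) = X)
    (hG : ∀ X : Matrix (Fin n) (Fin n) ℝ, Gᵀ * (G * X) = U * (diagonal lam * (Uᵀ * X))) :
    (G * (U * (diagonal f * Uᵀ))) * (G * (U * (diagonal f * Uᵀ)))ᵀ *
      (G * (U * (diagonal f * Uᵀ))) =
      G * (U * (diagonal (fun i => f i ^ 3 * lam i) * Uᵀ)) := by
  have hDD : ∀ (a b : Fin n → ℝ) (X : Matrix (Fin n) (Fin n) ℝ),
      diagonal a * (diagonal b * X) = diagonal (fun i => a i * b i) * X := by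
    intro a b X
    rw [← Matrix.mul_assoc, diagonal_mul_diagonal]
  simp only [transpose_mul, transpose_transpose, diagonal_transpose, Matrix.mul_assoc, hU, hG, hDD]
  congr 2
  funext i
  ring

lemma ns_quint {m n : ℕ} (G : Matrix (Fin m) (Fin n) ℝ) (U : Matrix (Fin n) (Fin n) ℝ)
    (lam f : Fin n → ℝ)
    (hU : ∀ X : Matrix (Fin n) (Fin n) ℝ, Uᵀ * (U * X) = X)
    (hG : ∀ X : Matrix (Fin n) (Fin n) ℝ, Gᵀ * (G * X) = U * (diagonal lam * (Uᵀ * X))) :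
    (G * (U * (diagonal f * Uᵀ))) * (G * (U * (diagonal f * Uᵀ)))ᵀ *
      ((G * (U * (diagonal f * Uᵀ))) * (G * (U * (diagonal f * Uᵀ)))ᵀ) *
      (G * (U * (diagonal f * Uᵀ))) =
      G * (U * (diagonal (fun i => f i ^ 5 * lam i ^ 2) * Uᵀ)) := by
  have hDD : ∀ (a b : Fin n → ℝ) (X : Matrix (Fin n) (Fin n) ℝ),
      diagonal a * (diagonal b * X) = diagonal (fun i => a i * b i) * X := by
    intro a b X
    rw [← Matrix.mul_assoc, diagonal_mul_diagonal]
  simp only [transpose_mul, transpose_transpose, diagonal_transpose, Matrix.mul_assoc, hU, hG, hDD]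
  congr 2
  funext i
  ring

theorem newton_schulz_alignment_bounds (m n : ℕ)
    (G : Matrix (Fin m) (Fin n) ℝ) (hG : G ≠ 0)
    (Giter : ℕ → Matrix (Fin m) (Fin n) ℝ)
    (h0 : Giter 0 = (Real.sqrt (∑ i, ∑ j, G i j ^ 2))⁻¹ • G)
    (hrec : ∀ t, Giter (t + 1) =
      (15 / 8 : ℝ) • Giter t
        - (5 / 4 : ℝ) • (Giter t * (Giter t)ᵀ * Giter t)
        + (3 / 8 : ℝ) • (Giter t * (Giter t)ᵀ * (Giter t * (Giter t)ᵀ) * Giter t)) :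
    ∀ T : ℕ,
      Real.sqrt (∑ i, ∑ j, G i j ^ 2) ≤ Matrix.trace (Gᵀ * Giter T) ∧
        Matrix.trace (Gᵀ * Giter T) ≤ traceNorm G := by
  intro T
  set c : ℝ := Real.sqrt (∑ i, ∑ j, G i j ^ 2) with hcdef
  have hsum_nonneg : (0:ℝ) ≤ ∑ i, ∑ j, G i j ^ 2 := by positivity
  have hsum_pos : (0:ℝ) < ∑ i, ∑ j, G i j ^ 2 := by
    obtain ⟨i, j, hij⟩ : ∃ i j, G i j ≠ 0 := by
      by_contra h
      push_neg at h
      exact hG (by ext i j; simpa using h i j)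
    calc (0:ℝ) < G i j ^ 2 := by positivity
      _ ≤ ∑ j, G i j ^ 2 :=
          Finset.single_le_sum (fun k _ => sq_nonneg (G i k)) (Finset.mem_univ j)
      _ ≤ ∑ i, ∑ j, G i j ^ 2 :=
          Finset.single_le_sum (f := fun k => ∑ j, G k j ^ 2)
            (fun k _ => by positivity) (Finset.mem_univ i)
  have hcpos : 0 < c := Real.sqrt_pos.2 hsum_pos
  have hc2 : c ^ 2 = ∑ i, ∑ j, G i j ^ 2 := Real.sq_sqrt hsum_nonneg
  have hS : (Gᵀ * G).IsHermitian := by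
    simpa [Matrix.conjTranspose_eq_transpose_of_trivial] using
      Matrix.isHermitian_conjTranspose_mul_self G
  set U : Matrix (Fin n) (Fin n) ℝ := (hS.eigenvectorUnitary : Matrix (Fin n) (Fin n) ℝ) with hUdef
  set lam : Fin n → ℝ := hS.eigenvalues with hlamdef
  have hU1 : U * Uᵀ = 1 := by
    have := (Matrix.mem_unitaryGroup_iff).mp hS.eigenvectorUnitary.2
    simpa [Matrix.star_eq_conjTranspose, Matrix.conjTranspose_eq_transpose_of_trivial] using this
  have hU2 : Uᵀ * U = 1 := by
    have := (Matrix.mem_unitaryGroup_iff').mp hS.eigenvectorUnitary.2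
    simpa [Matrix.star_eq_conjTranspose, Matrix.conjTranspose_eq_transpose_of_trivial] using this
  have hU2' : ∀ X : Matrix (Fin n) (Fin n) ℝ, Uᵀ * (U * X) = X := by
    intro X; rw [← Matrix.mul_assoc, hU2, Matrix.one_mul]
  have hspec : Gᵀ * G = U * (Matrix.diagonal lam * Uᵀ) := by
    have := hS.spectral_theorem
    simpa [Matrix.star_eq_conjTranspose, Matrix.conjTranspose_eq_transpose_of_trivial,
      Matrix.mul_assoc, Function.comp] using this
  have hspec' : ∀ X : Matrix (Fin n) (Fin n) ℝ,
      Gᵀ * (G * X) = U * (Matrix.diagonal lam * (Uᵀ * X)) := by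
    intro X
    rw [← Matrix.mul_assoc, hspec, Matrix.mul_assoc, Matrix.mul_assoc]
  have hPSD : (Gᵀ * G).PosSemidef := by
    simpa [Matrix.conjTranspose_eq_transpose_of_trivial] using
      Matrix.posSemidef_conjTranspose_mul_self G
  have hlam_nonneg : ∀ i, 0 ≤ lam i := fun i => hPSD.eigenvalues_nonneg i
  have hlamsum : ∑ i, lam i = c ^ 2 := by
    have h1 : Matrix.trace (Gᵀ * G) = ∑ i, lam i := by
      rw [hspec, Matrix.trace_mul_comm, Matrix.mul_assoc, hU2, Matrix.mul_one,
        Matrix.trace_diagonal]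
    have h2 : Matrix.trace (Gᵀ * G) = ∑ i, ∑ j, G i j ^ 2 := by
      rw [Finset.sum_comm]
      simp [Matrix.trace, Matrix.mul_apply, Matrix.diag, sq]
    rw [← h2, h1] at hc2
    exact hc2.symm
  -- key structural identity
  have key : ∀ t, Giter t = G * (U * (Matrix.diagonal (fun i => nsAux c (lam i) t) * Uᵀ)) := by
    intro t
    induction t with
    | zero =>
      have hD : Matrix.diagonal (fun i : Fin n => nsAux c (lam i) 0)
          = (c⁻¹ : ℝ) • (1 : Matrix (Fin n) (Fin n) ℝ) := by
        ext i j
        by_cases h : i = j <;> simp [h, nsAux, Matrix.diagonal_apply, Matrix.one_apply]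
      rw [h0, hD]
      simp [Matrix.smul_mul, Matrix.mul_smul, hU1]
    | succ t ih =>
      rw [hrec, ih,
        ns_cube G U lam (fun i => nsAux c (lam i) t) hU2' hspec',
        ns_quint G U lam (fun i => nsAux c (lam i) t) hU2' hspec']
      have hsmul : ∀ (a : ℝ) (f : Fin n → ℝ),
          a • (G * (U * (Matrix.diagonal f * Uᵀ)))
            = G * (U * (Matrix.diagonal (fun i => a * f i) * Uᵀ)) := by
        intro a f
        rw [show Matrix.diagonal (fun i => a * f i) = a • Matrix.diagonal f by
          ext i j; by_cases h : i = j <;> simp [h, Matrix.diagonal_apply]]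
        rw [Matrix.smul_mul, Matrix.mul_smul, Matrix.mul_smul]
      rw [hsmul, hsmul, hsmul]
      have hcomb : ∀ (a b d : Fin n → ℝ),
          G * (U * (Matrix.diagonal a * Uᵀ)) - G * (U * (Matrix.diagonal b * Uᵀ))
            + G * (U * (Matrix.diagonal d * Uᵀ))
            = G * (U * (Matrix.diagonal (fun i => a i - b i + d i) * Uᵀ)) := by
        intro a b d
        have hd : Matrix.diagonal (fun i => a i - b i + d i)
            = Matrix.diagonal a - Matrix.diagonal b + Matrix.diagonal d := by
          ext i j
          by_cases h : i = j <;>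
            simp [h, Matrix.diagonal_apply, Matrix.sub_apply, Matrix.add_apply]
        rw [hd, Matrix.add_mul, Matrix.sub_mul, Matrix.mul_add, Matrix.mul_sub,
          Matrix.mul_add, Matrix.mul_sub]
      rw [hcomb]
      have hfun : (fun i => 15 / 8 * nsAux c (lam i) t
            - 5 / 4 * (nsAux c (lam i) t ^ 3 * lam i)
            + 3 / 8 * (nsAux c (lam i) t ^ 5 * lam i ^ 2))
          = fun i => nsAux c (lam i) (t + 1) := by
        funext i
        show _ = nsAux c (lam i) (t + 1)
        rw [nsAux]
        ring
      rw [hfun]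
  -- trace formula
  have htr : Matrix.trace (Gᵀ * Giter T) = ∑ i, lam i * nsAux c (lam i) T := by
    rw [key T, hspec', hU2', Matrix.trace_mul_comm]
    simp only [Matrix.mul_assoc]
    rw [hU2, Matrix.mul_one, diagonal_mul_diagonal, Matrix.trace_diagonal]
  -- scalar bounds
  have hlam_le : ∀ i, lam i ≤ c ^ 2 := by
    intro i
    rw [← hlamsum]
    exact Finset.single_le_sum (fun k _ => hlam_nonneg k) (Finset.mem_univ i)
  have hx : ∀ i t, Real.sqrt (lam i) / c ≤ Real.sqrt (lam i) * nsAux c (lam i) t ∧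
      Real.sqrt (lam i) * nsAux c (lam i) t ≤ 1 := by
    intro i t
    have hs0 : 0 ≤ Real.sqrt (lam i) := Real.sqrt_nonneg _
    have hssq : Real.sqrt (lam i) ^ 2 = lam i := Real.sq_sqrt (hlam_nonneg i)
    have hsle : Real.sqrt (lam i) ≤ c := by
      rw [← Real.sqrt_sq hcpos.le]
      exact Real.sqrt_le_sqrt (by nlinarith [hlam_le i])
    have hbase : Real.sqrt (lam i) * nsAux c (lam i) 0 = Real.sqrt (lam i) / c := by
      rw [nsAux]; ring
    induction t with
    | zero =>
      constructor
      · rw [hbase]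
      · rw [hbase]
        rw [div_le_one hcpos]
        exact hsle
    | succ t iht =>
      obtain ⟨ih1, ih2⟩ := iht
      have hx0 : 0 ≤ Real.sqrt (lam i) * nsAux c (lam i) t := by
        refine le_trans ?_ ih1
        positivity
      set x := Real.sqrt (lam i) * nsAux c (lam i) t with hxdef
      have hstep : Real.sqrt (lam i) * nsAux c (lam i) (t + 1)
          = 15/8*x - 5/4*x^3 + 3/8*x^5 := by
        have h3 : x ^ 3 = Real.sqrt (lam i) * nsAux c (lam i) t ^ 3 * lam i := by
          rw [hxdef, show (Real.sqrt (lam i) * nsAux c (lam i) t) ^ 3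
              = Real.sqrt (lam i) ^ 2 * Real.sqrt (lam i) * nsAux c (lam i) t ^ 3 from by ring,
            hssq]
          ring
        have h5 : x ^ 5 = Real.sqrt (lam i) * nsAux c (lam i) t ^ 5 * lam i ^ 2 := by
          rw [hxdef, show (Real.sqrt (lam i) * nsAux c (lam i) t) ^ 5
              = (Real.sqrt (lam i) ^ 2) ^ 2 * Real.sqrt (lam i) * nsAux c (lam i) t ^ 5 from by
                ring,
            hssq]
          ring
        rw [nsAux, h3, h5, hxdef]
        ring
      constructor
      · rw [hstep]
        exact le_trans ih1 (ns_scalar_low x hx0 ih2)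
      · rw [hstep]
        exact ns_scalar_high x hx0 ih2
  have hterm_low : ∀ i, lam i / c ≤ lam i * nsAux c (lam i) T := by
    intro i
    have := (hx i T).1
    have hs0 : 0 ≤ Real.sqrt (lam i) := Real.sqrt_nonneg _
    have hmul : Real.sqrt (lam i) * Real.sqrt (lam i) = lam i :=
      Real.mul_self_sqrt (hlam_nonneg i)
    calc lam i / c = Real.sqrt (lam i) * (Real.sqrt (lam i) / c) := by
          rw [mul_div_assoc', hmul]
      _ ≤ Real.sqrt (lam i) * (Real.sqrt (lam i) * nsAux c (lam i) T) :=
          mul_le_mul_of_nonneg_left this hs0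
      _ = lam i * nsAux c (lam i) T := by rw [← mul_assoc, hmul]
  have hterm_high : ∀ i, lam i * nsAux c (lam i) T ≤ Real.sqrt (lam i) := by
    intro i
    have := (hx i T).2
    have hs0 : 0 ≤ Real.sqrt (lam i) := Real.sqrt_nonneg _
    have hmul : Real.sqrt (lam i) * Real.sqrt (lam i) = lam i :=
      Real.mul_self_sqrt (hlam_nonneg i)
    calc lam i * nsAux c (lam i) T
        = Real.sqrt (lam i) * (Real.sqrt (lam i) * nsAux c (lam i) T) := by
          rw [← mul_assoc, hmul]
      _ ≤ Real.sqrt (lam i) * 1 := mul_le_mul_of_nonneg_left this hs0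
      _ = Real.sqrt (lam i) := mul_one _
  constructor
  · rw [htr]
    calc c = c ^ 2 / c := by rw [sq, mul_div_assoc, div_self hcpos.ne', mul_one]
      _ = ∑ i, lam i / c := by rw [← hlamsum, Finset.sum_div]
      _ ≤ ∑ i, lam i * nsAux c (lam i) T := Finset.sum_le_sum fun i _ => hterm_low i
  · rw [htr]
    have hTN : traceNorm G = ∑ i, Real.sqrt (lam i) := rfl
    rw [hTN]
    exact Finset.sum_le_sum fun i _ => hterm_high i
end
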